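/- For every λ > √(μ/2), the function u(x) = √(μ/2)(3 coth²((2μ)^{1/4} x + coth^{-1}√(2/3 + (1/3)√(2/μ) λ))² - 2), defined for x > 0, solves the boundary value problem (1/2)u'' = 2u² - μ on (0,∞) with u(0) = λ and lim_{x→∞} u(x) = √(μ/2). -/

import Mathlib

open Real Filter

noncomputable def coth (x : ℝ) : ℝ := Real.cosh x / Real.sinh x

/-- Inverse hyperbolic cotangent on `(1, ∞)`. -/
noncomputable def arcoth (y : ℝ) : ℝ := (1/2) * Real.log ((y + 1) / (y - 1))

lemma coth_hasDerivAt {x : ℝ} (hx : Real.sinh x ≠ 0) :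
    HasDerivAt coth (1 - coth x ^ 2) x := by
  have h := (Real.hasDerivAt_cosh x).div (Real.hasDerivAt_sinh x) hx
  refine h.congr_deriv ?_
  have hc := Real.cosh_sq_sub_sinh_sq x
  unfold coth
  field_simp

lemma coth_arcoth {y : ℝ} (hy : 1 < y) : coth (arcoth y) = y := by
  have h1 : (0:ℝ) < y - 1 := by linarith
  have hr : (0:ℝ) < (y+1)/(y-1) := by positivity
  have hE : Real.exp (arcoth y) ^ 2 = (y+1)/(y-1) := by
    rw [← Real.exp_nat_mul]
    have h2 : ((2:ℕ):ℝ) * arcoth y = Real.log ((y+1)/(y-1)) := by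
      unfold arcoth; push_cast; ring
    rw [h2, Real.exp_log hr]
  set E := Real.exp (arcoth y) with hEdef
  have hEpos : 0 < E := Real.exp_pos _
  have hcosh : Real.cosh (arcoth y) = (E^2+1)/(2*E) := by
    rw [Real.cosh_eq, Real.exp_neg, ← hEdef]; field_simp
  have hsinh : Real.sinh (arcoth y) = (E^2-1)/(2*E) := by
    rw [Real.sinh_eq, Real.exp_neg, ← hEdef]; field_simp
  rw [coth, hcosh, hsinh, hE]
  have h3 : (y+1)/(y-1) - 1 = 2/(y-1) := by field_simp; norm_num
  have h4 : (y+1)/(y-1) + 1 = 2*y/(y-1) := by field_simp; ring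
  rw [h3, h4]
  rw [div_div_div_cancel_right₀]
  · rw [div_div_div_cancel_right₀] <;> [skip; positivity]
    field_simp
  · positivity

lemma tendsto_coth : Tendsto coth atTop (nhds 1) := by
  have key : ∀ x : ℝ, 0 < x →
      coth x = (1 + Real.exp (-(2*x)))/(1 - Real.exp (-(2*x))) := by
    intro x hx
    have hE : 0 < Real.exp x := Real.exp_pos x
    have hs : Real.sinh x ≠ 0 := ne_of_gt (Real.sinh_pos_iff.2 hx)
    have h2 : Real.exp (-(2*x)) = (Real.exp x)⁻¹ * (Real.exp x)⁻¹ := by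
      rw [← Real.exp_neg, ← Real.exp_add]; ring_nf
    have hlt : Real.exp (-(2*x)) < 1 := by
      rw [Real.exp_lt_one_iff]; linarith
    have hden : 1 - Real.exp (-(2*x)) ≠ 0 := by linarith
    have hspos : 0 < Real.exp x - (Real.exp x)⁻¹ := by
      have h5 : 0 < Real.sinh x := Real.sinh_pos_iff.2 hx
      rw [Real.sinh_eq, Real.exp_neg] at h5
      linarith
    rw [h2] at hden
    rw [coth, Real.cosh_eq, Real.sinh_eq, Real.exp_neg, h2]
    have hEne : Real.exp x ≠ 0 := hE.ne'
    field_simp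
  have hexp : Tendsto (fun x : ℝ => Real.exp (-(2*x))) atTop (nhds 0) := by
    apply Real.tendsto_exp_atBot.comp
    have : Tendsto (fun x : ℝ => 2*x) atTop atTop :=
      Tendsto.const_mul_atTop (by norm_num) tendsto_id
    exact tendsto_neg_atBot_iff.2 this
  have hdiv : Tendsto (fun x : ℝ => (1 + Real.exp (-(2*x)))/(1 - Real.exp (-(2*x))))
      atTop (nhds 1) := by
    have h1 : Tendsto (fun x : ℝ => 1 + Real.exp (-(2*x))) atTop (nhds 1) := by
      simpa using tendsto_const_nhds.add hexp
    have h2 : Tendsto (fun x : ℝ => 1 - Real.exp (-(2*x))) atTop (nhds 1) := by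
      simpa using tendsto_const_nhds.sub hexp
    simpa [Pi.div_def] using h1.div h2 one_ne_zero
  exact hdiv.congr' (by filter_upwards [eventually_gt_atTop 0] with x hx using (key x hx).symm)

/-- For `λ > √(μ/2)`, `u(x) = √(μ/2)(3 coth²((2μ)^{1/4} x + arcoth √(2/3 + (1/3)√(2/μ)λ)) - 2)`
solves `(1/2)u'' = 2u² - μ` on `(0,∞)` with `u(0) = λ` and `u(∞) = √(μ/2)`. -/
theorem stmt_9 (μ lam : ℝ) (hμ : 0 < μ) (hlam : Real.sqrt (μ/2) < lam) :
    ∀ u : ℝ → ℝ,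
      (∀ x : ℝ, u x = Real.sqrt (μ/2) *
        (3 * (coth ((2*μ) ^ ((1:ℝ)/4) * x
          + arcoth (Real.sqrt (2/3 + (1/3) * Real.sqrt (2/μ) * lam)))) ^ 2 - 2)) →
      ∃ u' : ℝ → ℝ,
        (∀ x : ℝ, 0 < x →
          HasDerivAt u (u' x) x ∧ HasDerivAt u' (4 * (u x) ^ 2 - 2 * μ) x) ∧
        u 0 = lam ∧
        Tendsto u atTop (nhds (Real.sqrt (μ/2))) := by
  intro u hu
  set K := Real.sqrt (μ/2) with hKdef
  set c := (2*μ) ^ ((1:ℝ)/4) with hcdef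
  set y := Real.sqrt (2/3 + (1/3) * Real.sqrt (2/μ) * lam) with hydef
  set a := arcoth y with hadef
  have hKpos : 0 < K := Real.sqrt_pos.2 (by linarith)
  have hcpos : 0 < c := Real.rpow_pos_of_pos (by linarith) _
  -- √(2/μ) * √(μ/2) = 1
  have hone : Real.sqrt (2/μ) * K = 1 := by
    rw [hKdef, ← Real.sqrt_mul (by positivity)]
    rw [show (2/μ) * (μ/2) = 1 by field_simp]
    exact Real.sqrt_one
  have hs1 : 1 < 2/3 + (1/3) * Real.sqrt (2/μ) * lam := by
    have h2μ : 0 < Real.sqrt (2/μ) := Real.sqrt_pos.2 (by positivity)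
    nlinarith [mul_lt_mul_of_pos_left hlam h2μ]
  have hy1 : 1 < y := by
    rw [hydef]
    exact Real.lt_sqrt_of_sq_lt (by nlinarith [hs1])
  have hapos : 0 < a := by
    rw [hadef]
    unfold arcoth
    have : 1 < (y+1)/(y-1) := by
      rw [lt_div_iff₀ (by linarith)]; linarith
    have := Real.log_pos this
    linarith
  have hK2 : K^2 = μ/2 := Real.sq_sqrt (by linarith)
  have hKc : K * c^2 = μ := by
    have hc2 : c^2 = Real.sqrt (2*μ) := by
      rw [hcdef, ← Real.rpow_natCast ((2*μ) ^ ((1:ℝ)/4)) 2, ← Real.rpow_mul (by linarith)]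
      rw [show ((1:ℝ)/4) * (2:ℕ) = (1/2 : ℝ) by push_cast; ring]
      exact (Real.sqrt_eq_rpow (2*μ)).symm
    rw [hc2, hKdef, ← Real.sqrt_mul (by positivity)]
    rw [show (μ/2) * (2*μ) = μ^2 by ring]
    exact Real.sqrt_sq (by linarith)
  refine ⟨fun x => K * 6 * c * (coth (c*x+a) - coth (c*x+a)^3), ?_, ?_, ?_⟩
  · intro x hx
    have htpos : 0 < c*x + a := by positivity
    have hsne : Real.sinh (c*x+a) ≠ 0 := ne_of_gt (Real.sinh_pos_iff.2 htpos)
    have hlin : HasDerivAt (fun x : ℝ => c*x+a) c x := by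
      simpa using ((hasDerivAt_id x).const_mul c).add_const a
    have hg : HasDerivAt (fun x : ℝ => coth (c*x+a))
        ((1 - coth (c*x+a)^2) * c) x := by
      have := (coth_hasDerivAt hsne).comp x hlin
      exact this
    constructor
    · have h1 := (((hg.pow 2).const_mul 3).sub_const 2).const_mul K
      have hfun : u = fun x : ℝ => K * (3 * (coth (c*x+a))^2 - 2) := funext hu
      rw [hfun]
      refine h1.congr_deriv ?_
      push_cast
      ring
    · have h2 : HasDerivAt (fun x : ℝ => K * 6 * c * (coth (c*x+a) - coth (c*x+a)^3))
          (K * 6 * c * (((1 - coth (c*x+a)^2) * c)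
            - 3 * coth (c*x+a) ^ 2 * ((1 - coth (c*x+a)^2) * c))) x :=
        (hg.sub (hg.pow 3)).const_mul (K * 6 * c)
      convert h2 using 1
      rw [hu x]
      set g := coth (c*x+a)
      linear_combination 4*(3*g^2-2)^2*hK2 - 6*(1-g^2)*(1-3*g^2)*hKc
  · rw [hu 0]
    have : c * 0 + a = a := by ring
    rw [this, hadef, coth_arcoth hy1, hydef,
      Real.sq_sqrt (le_of_lt (lt_trans one_pos hs1))]
    have h2μ : Real.sqrt (2/μ) * K = 1 := hone
    nlinarith [hone]
  · have hfun : u = fun x : ℝ => K * (3 * (coth (c*x+a))^2 - 2) := funext hu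
    rw [hfun]
    have ht : Tendsto (fun x : ℝ => c*x + a) atTop atTop :=
      (Tendsto.const_mul_atTop hcpos tendsto_id).atTop_add tendsto_const_nhds
    have hc1 : Tendsto (fun x : ℝ => coth (c*x+a)) atTop (nhds 1) :=
      tendsto_coth.comp ht
    have : Tendsto (fun x : ℝ => K * (3 * (coth (c*x+a))^2 - 2)) atTop
        (nhds (K * (3 * 1^2 - 2))) :=
      (((hc1.pow 2).const_mul 3).sub_const 2).const_mul K
    norm_num at this
    exact this
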